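/- Let Ω be a nonzero positive semidefinite stress matrix of framework (G,p). Then the Cayley configuration spectrahedron F of (G,p) is contained in the subspace { y ∈ R^{m̄} : Ω (Σ_{{i,j} missing} y_ij E^{ij}) = 0 }. -/

import Mathlib

open Matrix BigOperators

/-- `E^{ij}`: the symmetric matrix with 1's in entries `(i,j)` and `(j,i)`, 0 elsewhere. -/
def Eij {n : ℕ} (i j : Fin n) : Matrix (Fin n) (Fin n) ℝ :=
  Matrix.single i j 1 + Matrix.single j i 1


-- trace(M * Mᵀ) = 0 → M = 0 over ℝ
lemma aux_trace_self (k : ℕ) (M : Matrix (Fin k) (Fin k) ℝ)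
    (h : (M * Mᵀ).trace = 0) : M = 0 := by
  have h' : ∑ i, ∑ j, (M i j)^2 = 0 := by
    rw [Matrix.trace] at h
    simpa [Matrix.mul_apply, sq] using h
  ext i j
  have h1 : ∀ i ∈ Finset.univ, (0:ℝ) ≤ ∑ j, (M i j)^2 :=
    fun i _ => Finset.sum_nonneg fun j _ => sq_nonneg _
  have h2 := (Finset.sum_eq_zero_iff_of_nonneg h1).mp h' i (Finset.mem_univ i)
  have h3 := (Finset.sum_eq_zero_iff_of_nonneg (fun j _ => sq_nonneg (M i j))).mp h2 j
    (Finset.mem_univ j)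
  simpa [sq, mul_self_eq_zero] using h3

lemma aux_psd_mul_trace (k : ℕ) (A B : Matrix (Fin k) (Fin k) ℝ)
    (hA : A.PosSemidef) (hB : B.PosSemidef) (h : (A * B).trace = 0) : A * B = 0 := by
  obtain ⟨C, rfl⟩ : ∃ C, A = Cᴴ * C := by
    open scoped MatrixOrder in exact CStarAlgebra.nonneg_iff_eq_star_mul_self.mp hA.nonneg
  obtain ⟨D, rfl⟩ : ∃ D, B = Dᴴ * D := by
    open scoped MatrixOrder in exact CStarAlgebra.nonneg_iff_eq_star_mul_self.mp hB.nonneg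
  have hC : Cᴴ = Cᵀ := by ext i j; simp [Matrix.conjTranspose]
  have hD : Dᴴ = Dᵀ := by ext i j; simp [Matrix.conjTranspose]
  rw [hC, hD] at h ⊢
  have key : D * Cᵀ = 0 := by
    apply aux_trace_self
    have e1 : ((D * Cᵀ) * (D * Cᵀ)ᵀ).trace = ((D * (Cᵀ * C)) * Dᵀ).trace := by
      rw [Matrix.transpose_mul, Matrix.transpose_transpose]
      simp [Matrix.mul_assoc]
    rw [e1, Matrix.trace_mul_comm, ← Matrix.mul_assoc, Matrix.trace_mul_comm, h]
  have key2 : C * Dᵀ = 0 := by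
    have := congrArg Matrix.transpose key
    simpa using this
  calc Cᵀ * C * (Dᵀ * D) = Cᵀ * (C * Dᵀ) * D := by rw [Matrix.mul_assoc, Matrix.mul_assoc, Matrix.mul_assoc]
  _ = 0 := by rw [key2]; simp


lemma aux_VVt (n : ℕ) (hn : 0 < n) (V : Matrix (Fin n) (Fin (n-1)) ℝ)
    (hVe : Vᵀ *ᵥ (fun _ => (1 : ℝ)) = 0) (hVV : Vᵀ * V = 1) :
    V * Vᵀ = 1 - (n:ℝ)⁻¹ • (Matrix.of fun _ _ => (1:ℝ)) := by
  classical
  set c : Matrix (Fin n) (Fin 1) ℝ := Matrix.of (fun _ _ => (Real.sqrt n)⁻¹) with hc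
  have hsq : (Real.sqrt n)⁻¹ * (Real.sqrt n)⁻¹ = (n:ℝ)⁻¹ := by
    rw [← mul_inv]
    rw [Real.mul_self_sqrt (by positivity)]
  have h1 : Matrix.fromRows Vᵀ cᵀ * Matrix.fromCols V c = 1 := by
    rw [Matrix.fromRows_mul_fromCols]
    rw [hVV]
    have h2 : Vᵀ * c = 0 := by
      ext i j
      have := congrFun hVe i
      simp only [Matrix.mulVec, dotProduct] at this
      simp only [Matrix.mul_apply, hc, Matrix.of_apply, ← Finset.sum_mul]
      simp only [Pi.zero_apply] at this
      simp only [mul_one] at this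
      rw [show ∑ x : Fin n, Vᵀ i x = 0 from this]
      simp
    have h3 : cᵀ * V = 0 := by
      have := congrArg Matrix.transpose h2
      simpa using this
    have h4 : cᵀ * c = 1 := by
      ext i j
      simp [Matrix.mul_apply, hc, hsq, Matrix.one_apply, Fin.ext_iff,
        Fin.val_eq_zero i, Fin.val_eq_zero j,
        mul_inv_cancel₀ (show (n:ℝ) ≠ 0 by positivity)]
    rw [h2, h3, h4]
    simp [← Matrix.fromBlocks_one]
  have e : Fin n ≃ Fin (n-1) ⊕ Fin 1 :=
    (finCongr (Nat.succ_pred_eq_of_pos hn).symm).trans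
      ((finCongr (Nat.succ_pred_eq_of_pos hn ▸ rfl : n.pred.succ = (n-1)+1)).trans
        finSumFinEquiv.symm)
  have h5 : Matrix.fromCols V c * Matrix.fromRows Vᵀ cᵀ = 1 :=
    (Matrix.fromCols_mul_fromRows_eq_one_comm e V c Vᵀ cᵀ).mpr h1
  rw [Matrix.fromCols_mul_fromRows] at h5
  have h6 : c * cᵀ = (n:ℝ)⁻¹ • (Matrix.of fun _ _ => (1:ℝ)) := by
    ext i j
    simp [Matrix.mul_apply, hc, hsq]
  rw [h6] at h5
  linear_combination (norm := abel) h5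

/-- If `Ω` is a nonzero PSD stress matrix of `(G,p)`, then the Cayley configuration
spectrahedron of `(G,p)` is contained in `{y : Ω (Σ_{missing} y_ij E^{ij}) = 0}`. -/
theorem stmt18 (n r : ℕ) (G : SimpleGraph (Fin n)) [DecidableRel G.Adj]
    (P : Matrix (Fin n) (Fin r) ℝ) (hPe : Pᵀ *ᵥ (fun _ => (1 : ℝ)) = 0)
    (V : Matrix (Fin n) (Fin (n - 1)) ℝ)
    (hVe : Vᵀ *ᵥ (fun _ => (1 : ℝ)) = 0) (hVV : Vᵀ * V = 1)
    (X : Matrix (Fin (n - 1)) (Fin (n - 1)) ℝ) (hX : X = Vᵀ * P * Pᵀ * V)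
    (M : {q : Fin n × Fin n // q.1 < q.2 ∧ ¬ G.Adj q.1 q.2} →
        Matrix (Fin (n - 1)) (Fin (n - 1)) ℝ)
    (hM : ∀ q, M q = (-(1/2) : ℝ) • (Vᵀ * Eij q.1.1 q.1.2 * V))
    (Ω : Matrix (Fin n) (Fin n) ℝ)
    (hΩsym : Ω.IsSymm) (hΩP : Ω * P = 0) (hΩe : Ω *ᵥ (fun _ => (1 : ℝ)) = 0)
    (hΩmiss : ∀ i j, i ≠ j → ¬ G.Adj i j → Ω i j = 0)
    (hΩpsd : Ω.PosSemidef) (hΩne : Ω ≠ 0) :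
    {y : {q : Fin n × Fin n // q.1 < q.2 ∧ ¬ G.Adj q.1 q.2} → ℝ |
        (X + ∑ q, y q • M q).PosSemidef} ⊆
      {y | Ω * (∑ q, y q • Eij q.1.1 q.1.2) = 0} := by
  intro y hy
  simp only [Set.mem_setOf_eq] at hy ⊢
  rcases Nat.eq_zero_or_pos n with h0 | hn
  · exact absurd (by subst h0; ext i j; exact i.elim0) hΩne
  set S : Matrix (Fin n) (Fin n) ℝ := ∑ q, y q • Eij q.1.1 q.1.2 with hSdef
  set J : Matrix (Fin n) (Fin n) ℝ := Matrix.of fun _ _ => (1:ℝ) with hJdef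
  -- basic facts
  have hΩJ : Ω * J = 0 := by
    ext i j
    have h := congrFun hΩe i
    simp only [Matrix.mulVec, dotProduct, mul_one, Pi.zero_apply] at h
    simp [Matrix.mul_apply, hJdef, h]
  have hJΩ : J * Ω = 0 := by
    have h := congrArg Matrix.transpose hΩJ
    rw [Matrix.transpose_mul, hΩsym.eq] at h
    have hJt : Jᵀ = J := by ext i j; rfl
    rw [hJt] at h
    simpa using h
  have hJP : J * P = 0 := by
    ext i j
    have h := congrFun hPe j
    simp only [Matrix.mulVec, dotProduct, mul_one, Pi.zero_apply, Matrix.transpose_apply] at h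
    simp [Matrix.mul_apply, hJdef, h]
  have hK : V * Vᵀ = 1 - (n:ℝ)⁻¹ • J := aux_VVt n hn V hVe hVV
  have hΩK : Ω * (V * Vᵀ) = Ω := by
    rw [hK, Matrix.mul_sub, Matrix.mul_smul, hΩJ]; simp
  have hKP : V * Vᵀ * P = P := by
    rw [hK, Matrix.sub_mul, Matrix.smul_mul, hJP]; simp
  have hΩKW : ∀ W : Matrix (Fin n) (Fin n) ℝ, Ω * (V * (Vᵀ * W)) = Ω * W := by
    intro W
    rw [← Matrix.mul_assoc, ← Matrix.mul_assoc, Matrix.mul_assoc Ω V Vᵀ, hΩK]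
  have hKPW : ∀ W : Matrix (Fin r) (Fin (n-1)) ℝ, V * (Vᵀ * (P * W)) = P * W := by
    intro W
    rw [← Matrix.mul_assoc, ← Matrix.mul_assoc, hKP]
  -- support disjointness
  have hST : ∀ m k, Ω k m ≠ 0 → S m k = 0 := by
    intro m k hne
    rw [hSdef, Matrix.sum_apply]
    apply Finset.sum_eq_zero
    rintro ⟨⟨i, j⟩, hij, hadj⟩ -
    simp only [Matrix.smul_apply, smul_eq_mul]
    have hE : Eij i j m k = 0 := by
      unfold Eij
      simp only [Matrix.add_apply, Matrix.single, Matrix.of_apply]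
      by_cases h1 : i = m ∧ j = k
      · exact absurd (h1.1 ▸ h1.2 ▸ hΩmiss j i hij.ne' (fun h => hadj (G.adj_symm h))) hne
      by_cases h2 : j = m ∧ i = k
      · exact absurd (h2.1 ▸ h2.2 ▸ hΩmiss i j hij.ne hadj) hne
      rw [if_neg h1, if_neg h2, add_zero]
    rw [hE, mul_zero]
  have hdiagΩS : ∀ k, (Ω * S) k k = 0 := by
    intro k
    rw [Matrix.mul_apply]
    apply Finset.sum_eq_zero
    intro m _
    by_cases h : Ω k m = 0
    · rw [h, zero_mul]
    · rw [hST m k h, mul_zero]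
  have htrΩS : (Ω * S).trace = 0 := by
    rw [Matrix.trace]
    exact Finset.sum_eq_zero fun k _ => hdiagΩS k
  -- the PSD matrix Y
  have hVH : Vᴴ = Vᵀ := by ext i j; simp [Matrix.conjTranspose]
  have hY : (V * (X + ∑ q, y q • M q) * Vᵀ).PosSemidef := by
    have := hy.mul_mul_conjTranspose_same V
    rwa [hVH] at this
  -- compute Ω * Y
  have hMq : ∀ q, Ω * (V * (M q * Vᵀ)) =
      (-(1/2) : ℝ) • (Ω * (Eij q.1.1 q.1.2 * (V * Vᵀ))) := by
    intro q
    rw [hM q]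
    simp only [Matrix.smul_mul, Matrix.mul_smul]
    congr 1
    simp only [Matrix.mul_assoc]
    rw [hΩKW]
  have hmain : Ω * (V * (X + ∑ q, y q • M q) * Vᵀ) =
      (-(1/2) : ℝ) • (Ω * (S * (V * Vᵀ))) := by
    rw [Matrix.mul_add, Matrix.add_mul, Matrix.mul_add]
    have hx0 : Ω * (V * X * Vᵀ) = 0 := by
      rw [hX]
      simp only [Matrix.mul_assoc]
      rw [hΩKW, ← Matrix.mul_assoc, hΩP, Matrix.zero_mul]
    rw [hx0, zero_add, hSdef]
    simp only [Matrix.sum_mul, Matrix.mul_sum, Finset.smul_sum]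
    apply Finset.sum_congr rfl
    intro q _
    simp only [Matrix.smul_mul, Matrix.mul_smul, Matrix.mul_assoc]
    rw [hMq q]
    exact smul_comm _ _ _
  -- trace of Ω * Y is zero
  have htrY : (Ω * (V * (X + ∑ q, y q • M q) * Vᵀ)).trace = 0 := by
    rw [hmain, Matrix.trace_smul]
    have h1 : Ω * (S * (V * Vᵀ)) = Ω * S - (n:ℝ)⁻¹ • (Ω * S * J) := by
      rw [hK, Matrix.mul_sub, Matrix.mul_one, Matrix.mul_smul, Matrix.mul_sub,
        Matrix.mul_smul, Matrix.mul_assoc]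
    rw [h1, Matrix.trace_sub, htrΩS, Matrix.trace_smul]
    rw [Matrix.trace_mul_comm, ← Matrix.mul_assoc, hJΩ, Matrix.zero_mul]
    simp
  -- conclude Ω * Y = 0
  have hzero := aux_psd_mul_trace n Ω _ hΩpsd hY htrY
  rw [hmain] at hzero
  have hSK : Ω * (S * (V * Vᵀ)) = 0 := by
    have := smul_eq_zero.mp hzero
    rcases this with h | h
    · norm_num at h
    · exact h
  -- Ω S = (1/n) • Ω S J, with zero diagonal, hence zero
  have heq : Ω * S = (n:ℝ)⁻¹ • (Ω * S * J) := by
    have h1 : Ω * (S * (V * Vᵀ)) = Ω * S - (n:ℝ)⁻¹ • (Ω * S * J) := by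
      rw [hK, Matrix.mul_sub, Matrix.mul_one, Matrix.mul_smul, Matrix.mul_sub,
        Matrix.mul_smul, Matrix.mul_assoc]
    rw [h1] at hSK
    exact sub_eq_zero.mp hSK
  set T : Matrix (Fin n) (Fin n) ℝ := Ω * S with hT
  have hrow : ∀ k l, T k l = (n:ℝ)⁻¹ * ∑ m, T k m := by
    intro k l
    have h := congrFun (congrFun heq k) l
    have h2 : (T * J) k l = ∑ m, T k m := by
      rw [Matrix.mul_apply]
      simp [hJdef]
    rw [Matrix.smul_apply, h2, smul_eq_mul] at h
    exact h
  ext k l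
  have := (hrow k l).trans ((hrow k k).symm.trans (hdiagΩS k))
  simpa using this
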